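/- Let {W^{(k)}}_{k≥0} with W^{(k)} = z^k + Σ_{l≥1} W^k_l z^{-l} evolve by the Sato System ∂W^{(k)}/∂t_j + z^j W^{(k)} = W^{(j+k)} + Σ_{l=1}^{j} W^k_l W^{(j-l)}, and let w = 1 + Σ_{l≥1} w_l z^{-l} evolve by ∂w/∂t_j + z^j w = Σ_{l=0}^{j} w_l W^{(j-l)} (with w_0 = 1). Define H^{(j)} by w·H^{(j)} = Σ_{l=0}^{j} w_{j-l} W^{(l)}. Then the operators satisfy the intertwining relation w·(∂/∂t_j + H^{(j)}) = (∂/∂t_j + z^j)·w, and consequently the H^{(j)} satisfy the Central System. -/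

import Mathlib

/- Formal Laurent series in `z⁻¹` are modelled as Hahn series in `ζ = z⁻¹`:
the coefficient of `z^{-l}` is the coefficient at index `l`, and the series `z`
is `HahnSeries.single (-1) 1`.  The coefficient ring `R` consists of functions
of the times, with derivations `dT j = ∂/∂t_j` acting coefficientwise. -/

variable {R : Type*} [CommRing R]

/-- Coefficientwise action of a derivation on Laurent series. -/
noncomputable def liftD (d : R →+ R) (f : HahnSeries ℤ R) : HahnSeries ℤ R where
  coeff n := d (f.coeff n)
  isPWO_support' := f.isPWO_support'.mono (by
    intro n hn
    simp only [Function.mem_support] at hn ⊢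
    intro h0
    exact hn (by rw [h0, map_zero]))

/-- The Laurent series `z`. -/
noncomputable def Zs (R : Type*) [CommRing R] : HahnSeries ℤ R :=
  HahnSeries.single (-1) 1

theorem liftD_coeff (d : R →+ R) (f : HahnSeries ℤ R) (n : ℤ) :
    (liftD d f).coeff n = d (f.coeff n) := rfl

theorem liftD_add (d : R →+ R) (f g : HahnSeries ℤ R) :
    liftD d (f + g) = liftD d f + liftD d g := by
  ext n; simp [liftD_coeff, HahnSeries.coeff_add]

theorem liftD_smul (d : R →+ R) (hd : ∀ a b, d (a * b) = d a * b + a * d b)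
    (c : R) (f : HahnSeries ℤ R) :
    liftD d (c • f) = d c • f + c • liftD d f := by
  ext n
  simp [liftD_coeff, HahnSeries.coeff_smul, HahnSeries.coeff_add, hd, smul_eq_mul]

theorem liftD_support (d : R →+ R) (f : HahnSeries ℤ R) :
    (liftD d f).support ⊆ f.support := by
  intro n hn
  rw [HahnSeries.mem_support] at hn ⊢
  rw [liftD_coeff] at hn
  intro h0
  exact hn (by rw [h0, map_zero])

theorem liftD_mul (d : R →+ R) (hd : ∀ a b, d (a * b) = d a * b + a * d b)
    (a b : HahnSeries ℤ R) :
    liftD d (a * b) = liftD d a * b + a * liftD d b := by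
  ext n
  rw [HahnSeries.coeff_add, liftD_coeff, HahnSeries.coeff_mul,
    HahnSeries.coeff_mul_left' a.isPWO_support (liftD_support d a),
    HahnSeries.coeff_mul_right' b.isPWO_support (liftD_support d b),
    map_sum, ← Finset.sum_add_distrib]
  exact Finset.sum_congr rfl fun ij _ => hd _ _

theorem liftD_sum (d : R →+ R) (s : Finset ℕ) (F : ℕ → HahnSeries ℤ R) :
    liftD d (∑ i ∈ s, F i) = ∑ i ∈ s, liftD d (F i) := by
  classical
  induction s using Finset.induction with
  | empty => ext n; simp [liftD_coeff]
  | insert _ _ h ih => rw [Finset.sum_insert h, Finset.sum_insert h, liftD_add, ih]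

theorem hahn_sum_coeff (s : Finset ℕ) (F : ℕ → HahnSeries ℤ R) (n : ℤ) :
    (∑ i ∈ s, F i).coeff n = ∑ i ∈ s, (F i).coeff n := by
  classical
  induction s using Finset.induction with
  | empty => simp
  | insert _ _ h ih => rw [Finset.sum_insert h, Finset.sum_insert h, HahnSeries.coeff_add, ih]

/-- Master convolution lemma. -/
theorem mul_coeff_Icc (a x : HahnSeries ℤ R) (p q : ℤ)
    (ha : ∀ n < p, a.coeff n = 0) (hx : ∀ n < q, x.coeff n = 0) (n : ℤ) :
    (a * x).coeff n = ∑ i ∈ Finset.Icc p (n - q), a.coeff i * x.coeff (n - i) := by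
  classical
  have hinj : Function.Injective (fun i : ℤ => (i, n - i)) := by
    intro i j h
    simpa using congrArg Prod.fst h
  rw [HahnSeries.coeff_mul]
  rw [show (∑ i ∈ Finset.Icc p (n - q), a.coeff i * x.coeff (n - i))
      = ∑ ij ∈ (Finset.Icc p (n - q)).map ⟨fun i => (i, n - i), hinj⟩,
          a.coeff ij.1 * x.coeff ij.2 by rw [Finset.sum_map]; rfl]
  refine Finset.sum_subset ?_ ?_
  · rintro ⟨u, v⟩ huv
    rw [Finset.mem_addAntidiagonal] at huv
    obtain ⟨hu, hv, huvn⟩ := huv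
    rw [Finset.mem_map]
    refine ⟨u, ?_, by simp [show n - u = v by omega]⟩
    rw [Finset.mem_Icc]
    constructor
    · by_contra hc; exact hu (ha u (by omega))
    · by_contra hc; exact hv (hx v (by omega))
  · rintro ⟨u, v⟩ huv hnv
    rw [Finset.mem_map] at huv
    obtain ⟨i, _, hi⟩ := huv
    simp only [Function.Embedding.coeFn_mk] at hi
    rw [← hi] at hnv ⊢
    rw [Finset.mem_addAntidiagonal] at hnv
    by_cases h1 : a.coeff i = 0
    · exact mul_eq_zero_of_left h1 _
    · by_cases h2 : x.coeff (n - i) = 0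
      · exact mul_eq_zero_of_right _ h2
      · exact absurd ⟨by simpa [HahnSeries.mem_support] using h1,
          by simpa [HahnSeries.mem_support] using h2, by omega⟩ hnv

/-- Membership in the span of `W 0, …, W N` with explicit coefficients. -/
def InW (W : ℕ → HahnSeries ℤ R) (N : ℕ) (S : HahnSeries ℤ R) : Prop :=
  ∃ c : ℕ → R, S = ∑ i ∈ Finset.range (N + 1), c i • W i

theorem InW_zero (W : ℕ → HahnSeries ℤ R) (N : ℕ) : InW W N 0 :=
  ⟨0, by simp⟩

theorem InW_add {W : ℕ → HahnSeries ℤ R} {N : ℕ} {S T : HahnSeries ℤ R}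
    (hS : InW W N S) (hT : InW W N T) : InW W N (S + T) := by
  obtain ⟨c, rfl⟩ := hS
  obtain ⟨d, rfl⟩ := hT
  refine ⟨c + d, ?_⟩
  rw [← Finset.sum_add_distrib]
  exact Finset.sum_congr rfl fun i _ => by simp [add_smul]

theorem InW_smul {W : ℕ → HahnSeries ℤ R} {N : ℕ} {S : HahnSeries ℤ R}
    (r : R) (hS : InW W N S) : InW W N (r • S) := by
  obtain ⟨c, rfl⟩ := hS
  refine ⟨fun i => r * c i, ?_⟩
  rw [Finset.smul_sum]
  exact Finset.sum_congr rfl fun i _ => by rw [smul_smul]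

theorem InW_W (W : ℕ → HahnSeries ℤ R) {N i : ℕ} (h : i ≤ N) : InW W N (W i) := by
  classical
  refine ⟨fun i' => if i' = i then 1 else 0, ?_⟩
  rw [Finset.sum_congr rfl (fun i' _ => show (if i' = i then (1:R) else 0) • W i'
      = if i' = i then W i' else 0 by split_ifs <;> simp)]
  rw [Finset.sum_ite_eq' (Finset.range (N + 1)) i W,
    if_pos (Finset.mem_range.mpr (by omega))]

theorem InW_sum {W : ℕ → HahnSeries ℤ R} {N : ℕ} (s : Finset ℕ)
    (F : ℕ → HahnSeries ℤ R) (h : ∀ x ∈ s, InW W N (F x)) :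
    InW W N (∑ x ∈ s, F x) := by
  classical
  induction s using Finset.induction with
  | empty => simpa using InW_zero W N
  | @insert a s ha ih =>
      rw [Finset.sum_insert ha]
      exact InW_add (h a (Finset.mem_insert_self a s))
        (ih fun x hx => h x (Finset.mem_insert_of_mem hx))

theorem InW_mono {W : ℕ → HahnSeries ℤ R} {N N' : ℕ} {S : HahnSeries ℤ R}
    (h : N ≤ N') (hS : InW W N S) : InW W N' S := by
  classical
  obtain ⟨c, rfl⟩ := hS
  refine ⟨fun i => if i < N + 1 then c i else 0, ?_⟩
  rw [← Finset.sum_subset (Finset.range_subset_range.mpr (Nat.succ_le_succ h))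
    (fun i _ hi => show (if i < N + 1 then c i else 0) • W i = 0 by
      rw [if_neg (by simpa using hi), zero_smul])]
  exact Finset.sum_congr rfl fun i hi => by
    rw [if_pos (Finset.mem_range.mp hi)]

theorem hahn_smul_support (r : R) (b : HahnSeries ℤ R) :
    (r • b).support ⊆ b.support := by
  intro x hx
  rw [HahnSeries.mem_support] at hx ⊢
  intro h0
  exact hx (by rw [HahnSeries.coeff_smul, h0, smul_zero])

theorem hahn_mul_smul (r : R) (a b : HahnSeries ℤ R) :
    a * (r • b) = r • (a * b) := by
  ext n
  rw [HahnSeries.coeff_smul, smul_eq_mul,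
    HahnSeries.coeff_mul_right' b.isPWO_support (hahn_smul_support r b),
    HahnSeries.coeff_mul, Finset.mul_sum]
  refine Finset.sum_congr rfl fun ij _ => ?_
  rw [HahnSeries.coeff_smul, smul_eq_mul]
  ring


/-- if `{W⁽ᵏ⁾}` evolves by the Sato System, `w` evolves by the
Darboux–Sato equation, and `H⁽ʲ⁾` is defined by the Darboux relation
`w·H⁽ʲ⁾ = Σ_{l=0}^j w_{j-l} W⁽ˡ⁾`, then the operators intertwine:
`w·(∂/∂t_j + H⁽ʲ⁾) = (∂/∂t_j + z^j)·w`, and consequently the `H⁽ʲ⁾` satisfy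
the Central System. -/
theorem darboux_intertwining (dT : ℕ → R →+ R)
    (hdT : ∀ j, ∀ a b : R, dT j (a * b) = dT j a * b + a * dT j b)
    (W : ℕ → HahnSeries ℤ R) (w : HahnSeries ℤ R) (H : ℕ → HahnSeries ℤ R)
    (hWshape : ∀ k, (W k).coeff (-(k : ℤ)) = 1 ∧
      (∀ n : ℤ, n < -(k : ℤ) → (W k).coeff n = 0) ∧
      (∀ n : ℤ, -(k : ℤ) < n → n ≤ 0 → (W k).coeff n = 0))
    (hwshape : w.coeff 0 = 1 ∧ ∀ n : ℤ, n < 0 → w.coeff n = 0)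
    (hSato : ∀ j k, liftD (dT j) (W k) + (Zs R) ^ j * W k
        = W (j + k) + ∑ l ∈ Finset.Icc 1 j, ((W k).coeff (l : ℤ)) • W (j - l))
    (hweq : ∀ j, liftD (dT j) w + (Zs R) ^ j * w
        = ∑ l ∈ Finset.range (j + 1), (w.coeff (l : ℤ)) • W (j - l))
    (hDarboux : ∀ j, w * H j
        = ∑ l ∈ Finset.range (j + 1), (w.coeff ((j - l : ℕ) : ℤ)) • W l) :
    (∀ j, ∀ f : HahnSeries ℤ R,
        w * (liftD (dT j) f + H j * f)
          = liftD (dT j) (w * f) + (Zs R) ^ j * (w * f)) ∧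
    (∀ j k, liftD (dT j) (H k) + H j * H k
        = H (j + k)
          + ∑ l ∈ Finset.Icc 1 k, ((H j).coeff (l : ℤ)) • H (k - l)
          + ∑ l ∈ Finset.Icc 1 j, ((H k).coeff (l : ℤ)) • H (j - l)) := by
  classical
  obtain ⟨hw0, hwneg⟩ := hwshape
  have hwneg' : ∀ n : ℤ, n < 0 → w.coeff n = 0 := hwneg
  -- the derivations kill 1
  have hd1 : ∀ j, dT j (1 : R) = 0 := by
    intro j
    have h := hdT j 1 1
    simp only [mul_one, one_mul] at h
    exact (left_eq_add.mp h)
  -- Darboux–Sato relation in multiplicative form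
  have key : ∀ j, w * H j = liftD (dT j) w + (Zs R) ^ j * w := by
    intro j
    rw [hDarboux j, hweq j, ← Finset.sum_range_reflect]
    refine Finset.sum_congr rfl fun i hi => ?_
    rw [Finset.mem_range] at hi
    have e1 : j + 1 - 1 - i = j - i := by omega
    rw [e1, Nat.sub_sub_self (by omega : i ≤ j)]
  -- Part 1 : intertwining
  have part1 : ∀ j, ∀ f : HahnSeries ℤ R,
      w * (liftD (dT j) f + H j * f)
        = liftD (dT j) (w * f) + (Zs R) ^ j * (w * f) := by
    intro j f
    have lm := liftD_mul (dT j) (hdT j) w f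
    calc w * (liftD (dT j) f + H j * f)
        = w * liftD (dT j) f + (w * H j) * f := by ring
      _ = w * liftD (dT j) f + (liftD (dT j) w + (Zs R) ^ j * w) * f := by rw [key j]
      _ = liftD (dT j) (w * f) + (Zs R) ^ j * (w * f) := by rw [lm]; ring
  refine ⟨part1, ?_⟩
  -- shape of the W's at nonpositive indices
  have hWc : ∀ l m : ℕ, (W l).coeff (-(m : ℤ)) = if m = l then 1 else 0 := by
    intro l m
    obtain ⟨h1, h2, h3⟩ := hWshape l
    rcases lt_trichotomy (m : ℤ) (l : ℤ) with h | h | h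
    · rw [if_neg (by exact_mod_cast h.ne)]
      exact h3 _ (by omega) (by omega)
    · have hm : m = l := by exact_mod_cast h
      rw [if_pos hm, hm]
      exact h1
    · rw [if_neg (by exact_mod_cast h.ne')]
      exact h2 _ (by omega)
  -- coefficients of w * H k
  have hS : ∀ k (n : ℤ), (w * H k).coeff n
      = ∑ l ∈ Finset.range (k + 1), w.coeff ((k - l : ℕ) : ℤ) * (W l).coeff n := by
    intro k n
    rw [hDarboux k, hahn_sum_coeff]
    exact Finset.sum_congr rfl fun l _ => by
      rw [HahnSeries.coeff_smul, smul_eq_mul]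
  have hSneg : ∀ k (m : ℕ), m ≤ k →
      (w * H k).coeff (-(m : ℤ)) = w.coeff ((k - m : ℕ) : ℤ) := by
    intro k m hm
    rw [hS]
    rw [Finset.sum_eq_single_of_mem m (Finset.mem_range.mpr (by omega))
      (fun l _ hlm => by rw [hWc l m, if_neg (fun h => hlm h.symm), mul_zero])]
    rw [hWc m m, if_pos rfl, mul_one]
  have hSlow : ∀ (k : ℕ) (n : ℤ), n < -(k : ℤ) → (w * H k).coeff n = 0 := by
    intro k n hn
    rw [hS]
    refine Finset.sum_eq_zero fun l hl => ?_
    rw [Finset.mem_range] at hl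
    have hlk : (l : ℤ) ≤ (k : ℤ) := by exact_mod_cast (by omega : l ≤ k)
    rw [(hWshape l).2.1 n (by omega), mul_zero]
  -- H k vanishes below -k
  have hHlow : ∀ (k : ℕ), ∀ n : ℤ, n < -(k : ℤ) → (H k).coeff n = 0 := by
    intro k
    by_cases h0 : H k = 0
    · intro n _; rw [h0, HahnSeries.coeff_zero]
    · have hord : -(k : ℤ) ≤ (H k).order := by
        by_contra hc
        push_neg at hc
        have hco := mt HahnSeries.coeff_order_eq_zero.mp h0
        have hM := mul_coeff_Icc w (H k) 0 ((H k).order) hwneg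
          (fun n hn => HahnSeries.coeff_eq_zero_of_lt_order hn) ((H k).order)
        rw [sub_self, Finset.Icc_self, Finset.sum_singleton, sub_zero, hw0, one_mul] at hM
        rw [hSlow k _ hc] at hM
        exact hco hM.symm
      intro n hn
      exact HahnSeries.coeff_eq_zero_of_lt_order (by omega)
  -- diagonal and mid-range coefficients of H k
  have hHc : ∀ (k : ℕ) (m : ℕ), m ≤ k → (H k).coeff (-(m : ℤ)) = if m = k then 1 else 0 := by
    intro k
    suffices hsuf : ∀ r (m : ℕ), m ≤ k → k - m = r →
        (H k).coeff (-(m : ℤ)) = if m = k then 1 else 0 by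
      intro m hm; exact hsuf (k - m) m hm rfl
    intro r
    induction r using Nat.strong_induction_on with
    | _ r ih =>
      intro m hm hr
      have hM := mul_coeff_Icc w (H k) 0 (-(k : ℤ)) hwneg (hHlow k) (-(m : ℤ))
      have hb : -(m : ℤ) - -(k : ℤ) = ((k - m : ℕ) : ℤ) := by omega
      rw [hb, hSneg k m hm] at hM
      have hsplit : Finset.Icc (0 : ℤ) ((k - m : ℕ) : ℤ)
          = insert 0 (Finset.Icc 1 ((k - m : ℕ) : ℤ)) := by
        ext i
        simp only [Finset.mem_Icc, Finset.mem_insert]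
        omega
      rw [hsplit, Finset.sum_insert (by simp)] at hM
      rw [hw0, one_mul, sub_zero] at hM
      have htail : ∑ i ∈ Finset.Icc (1 : ℤ) ((k - m : ℕ) : ℤ),
          w.coeff i * (H k).coeff (-(m : ℤ) - i)
          = if m = k then 0 else w.coeff ((k - m : ℕ) : ℤ) := by
        by_cases hmk : m = k
        · rw [if_pos hmk, hmk, Nat.sub_self]
          rw [show Finset.Icc (1 : ℤ) ((0 : ℕ) : ℤ) = ∅ from
            Finset.Icc_eq_empty (by omega)]
          exact Finset.sum_empty
        · rw [if_neg hmk]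
          have hmem : ((k - m : ℕ) : ℤ) ∈ Finset.Icc (1 : ℤ) ((k - m : ℕ) : ℤ) := by
            rw [Finset.mem_Icc]
            constructor
            · have : 1 ≤ k - m := by omega
              exact_mod_cast this
            · exact le_refl _
          rw [Finset.sum_eq_single_of_mem _ hmem ?_]
          · have e : -(m : ℤ) - ((k - m : ℕ) : ℤ) = -(k : ℤ) := by omega
            rw [e]
            have hk1 : (H k).coeff (-(k : ℤ)) = 1 := by
              have := ih 0 (by omega) k le_rfl (Nat.sub_self k)
              simpa using this
            rw [hk1, mul_one]
          · intro i hi hne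
            rw [Finset.mem_Icc] at hi
            obtain ⟨i', rfl⟩ : ∃ i' : ℕ, (i' : ℤ) = i := ⟨i.toNat, by omega⟩
            have e : -(m : ℤ) - (i' : ℤ) = -(((m + i' : ℕ) : ℤ)) := by push_cast; omega
            have hcast : ((k - m : ℕ) : ℤ) = (k : ℤ) - m := by push_cast [hm]; ring
            have him : m + i' ≤ k := by omega
            have := ih (k - (m + i')) (by omega) (m + i') him rfl
            rw [if_neg (by omega)] at this
            rw [e, this, mul_zero]
      rw [htail] at hM
      by_cases hmk : m = k
      · rw [if_pos hmk]
        rw [if_pos hmk, hmk, Nat.sub_self, add_zero] at hM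
        subst hmk
        rw [show ((0 : ℕ) : ℤ) = 0 by norm_num, hw0] at hM
        exact hM.symm
      · rw [if_neg hmk]
        rw [if_neg hmk] at hM
        have h2 : (H k).coeff (-(m : ℤ)) + w.coeff ((k - m : ℕ) : ℤ)
            = 0 + w.coeff ((k - m : ℕ) : ℤ) := by rw [zero_add]; exact hM.symm
        exact add_right_cancel h2
  -- packaged shape of H
  have hH1 : ∀ k : ℕ, (H k).coeff (-(k : ℤ)) = 1 := fun k => by
    simpa using hHc k k le_rfl
  have hHmid : ∀ (k : ℕ) (n : ℤ), -(k : ℤ) < n → n ≤ 0 → (H k).coeff n = 0 := by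
    intro k n h1 h2
    obtain ⟨m, rfl⟩ : ∃ m : ℕ, n = -(m : ℤ) := ⟨(-n).toNat, by omega⟩
    have h3 := hHc k m (by omega)
    rw [if_neg (by omega)] at h3
    exact h3
  have hHneg : ∀ (k : ℕ) (n : ℤ), n ≤ 0 →
      (H k).coeff n = if n = -(k : ℤ) then 1 else 0 := by
    intro k n hn
    rcases lt_trichotomy n (-(k : ℤ)) with h | h | h
    · rw [if_neg (by omega), hHlow k n h]
    · rw [if_pos h, h, hH1]
    · rw [if_neg (by omega), hHmid k n h hn]
  have hdH : ∀ (j k : ℕ) (n : ℤ), n ≤ 0 → dT j ((H k).coeff n) = 0 := by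
    intro j k n hn
    rw [hHneg k n hn]
    split_ifs with h
    · exact hd1 j
    · exact map_zero _
  -- coefficients of H j * H k at nonpositive indices
  have hHH : ∀ (j k : ℕ) (n : ℤ), n ≤ 0 → (H j * H k).coeff n
      = (if n = -((j : ℤ) + k) then 1 else 0)
        + (if 0 < n + k then (H j).coeff (n + k) else 0)
        + (if 0 < n + j then (H k).coeff (n + j) else 0) := by
    intro j k n hn
    rw [mul_coeff_Icc (H j) (H k) (-(j : ℤ)) (-(k : ℤ)) (hHlow j) (hHlow k) n]
    rw [show n - -(k : ℤ) = n + k by ring]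
    rcases lt_trichotomy n (-((j : ℤ) + k)) with hc | hc | hc
    · rw [Finset.Icc_eq_empty (by omega), Finset.sum_empty]
      rw [if_neg (by omega), if_neg (by omega), if_neg (by omega)]
      norm_num
    · rw [show n + (k : ℤ) = -(j : ℤ) by omega, Finset.Icc_self, Finset.sum_singleton]
      rw [show n - -(j : ℤ) = -(k : ℤ) by omega, hH1 j, hH1 k,
        if_pos hc, if_neg (by omega), if_neg (by omega)]
      norm_num
    · have hsub : ({-(j : ℤ), n + k} : Finset ℤ) ⊆ Finset.Icc (-(j : ℤ)) (n + k) := by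
        intro i hi
        simp only [Finset.mem_insert, Finset.mem_singleton] at hi
        rw [Finset.mem_Icc]
        rcases hi with rfl | rfl <;> omega
      have hzero : ∀ i ∈ Finset.Icc (-(j : ℤ)) (n + k),
          i ∉ ({-(j : ℤ), n + k} : Finset ℤ) →
          (H j).coeff i * (H k).coeff (n - i) = 0 := by
        intro i hi hni
        rw [Finset.mem_Icc] at hi
        simp only [Finset.mem_insert, Finset.mem_singleton, not_or] at hni
        by_cases hile : i ≤ 0
        · rw [hHmid j i (by omega) hile, zero_mul]
        · rw [hHmid k (n - i) (by omega) (by omega), mul_zero]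
      rw [← Finset.sum_subset hsub hzero, Finset.sum_pair (by omega)]
      rw [show n - -(j : ℤ) = n + j by ring, show n - (n + (k:ℤ)) = -(k:ℤ) by ring,
        hH1 j, hH1 k, one_mul, mul_one, if_neg (by omega), zero_add]
      by_cases h1 : 0 < n + (k : ℤ) <;> by_cases h2 : 0 < n + (j : ℤ)
      · rw [if_pos h1, if_pos h2]; ring
      · rw [if_pos h1, if_neg h2, hHneg k (n + j) (by omega), if_neg (by omega)]; ring
      · rw [if_neg h1, if_pos h2, hHneg j (n + k) (by omega), if_neg (by omega)]; ring
      · rw [if_neg h1, if_neg h2, hHneg k (n + j) (by omega), if_neg (by omega),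
          hHneg j (n + k) (by omega), if_neg (by omega)]
  -- the two sides of the Central System agree at nonpositive indices
  have hKT : ∀ (j k : ℕ) (n : ℤ), n ≤ 0 →
      (liftD (dT j) (H k) + H j * H k).coeff n
        = (H (j + k)
            + ∑ l ∈ Finset.Icc 1 k, ((H j).coeff (l : ℤ)) • H (k - l)
            + ∑ l ∈ Finset.Icc 1 j, ((H k).coeff (l : ℤ)) • H (j - l)).coeff n := by
    intro j k n hn
    rw [HahnSeries.coeff_add, liftD_coeff, hdH j k n hn, zero_add, hHH j k n hn]
    rw [HahnSeries.coeff_add, HahnSeries.coeff_add, hahn_sum_coeff, hahn_sum_coeff]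
    have e1 : (H (j + k)).coeff n = if n = -((j : ℤ) + k) then 1 else 0 := by
      rw [hHneg (j + k) n hn, show -(((j + k : ℕ)) : ℤ) = -((j : ℤ) + k) by push_cast; ring]
    have e2 : ∑ l ∈ Finset.Icc 1 k, (((H j).coeff (l : ℤ)) • H (k - l)).coeff n
        = if 0 < n + (k : ℤ) then (H j).coeff (n + k) else 0 := by
      by_cases h : 0 < n + (k : ℤ)
      · rw [if_pos h]
        rw [Finset.sum_eq_single_of_mem ((n + k).toNat)
          (Finset.mem_Icc.mpr (by omega)) ?_]
        · rw [HahnSeries.coeff_smul, smul_eq_mul,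
            hHneg (k - (n + k).toNat) n (by omega), if_pos (by omega), mul_one,
            show (((n + (k:ℤ)).toNat : ℤ)) = n + k by omega]
        · intro l hl hne
          rw [Finset.mem_Icc] at hl
          rw [HahnSeries.coeff_smul, smul_eq_mul,
            hHneg (k - l) n (by omega), if_neg (by omega), mul_zero]
      · rw [if_neg h]
        refine Finset.sum_eq_zero fun l hl => ?_
        rw [Finset.mem_Icc] at hl
        rw [HahnSeries.coeff_smul, smul_eq_mul,
          hHneg (k - l) n (by omega), if_neg (by omega), mul_zero]
    have e3 : ∑ l ∈ Finset.Icc 1 j, (((H k).coeff (l : ℤ)) • H (j - l)).coeff n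
        = if 0 < n + (j : ℤ) then (H k).coeff (n + j) else 0 := by
      by_cases h : 0 < n + (j : ℤ)
      · rw [if_pos h]
        rw [Finset.sum_eq_single_of_mem ((n + j).toNat)
          (Finset.mem_Icc.mpr (by omega)) ?_]
        · rw [HahnSeries.coeff_smul, smul_eq_mul,
            hHneg (j - (n + j).toNat) n (by omega), if_pos (by omega), mul_one,
            show (((n + (j:ℤ)).toNat : ℤ)) = n + j by omega]
        · intro l hl hne
          rw [Finset.mem_Icc] at hl
          rw [HahnSeries.coeff_smul, smul_eq_mul,
            hHneg (j - l) n (by omega), if_neg (by omega), mul_zero]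
      · rw [if_neg h]
        refine Finset.sum_eq_zero fun l hl => ?_
        rw [Finset.mem_Icc] at hl
        rw [HahnSeries.coeff_smul, smul_eq_mul,
          hHneg (j - l) n (by omega), if_neg (by omega), mul_zero]
    rw [e1, e2, e3]
  -- both sides vanish far below
  have hKlow : ∀ (j k : ℕ) (n : ℤ), n < -((j : ℤ) + k) →
      (liftD (dT j) (H k) + H j * H k).coeff n = 0 := by
    intro j k n hn
    rw [HahnSeries.coeff_add, liftD_coeff, hHlow k n (by omega), map_zero, zero_add]
    rw [mul_coeff_Icc (H j) (H k) (-(j : ℤ)) (-(k : ℤ)) (hHlow j) (hHlow k) n,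
      show n - -(k : ℤ) = n + k by ring, Finset.Icc_eq_empty (by omega), Finset.sum_empty]
  have hTlow : ∀ (j k : ℕ) (n : ℤ), n < -((j : ℤ) + k) →
      (H (j + k)
        + ∑ l ∈ Finset.Icc 1 k, ((H j).coeff (l : ℤ)) • H (k - l)
        + ∑ l ∈ Finset.Icc 1 j, ((H k).coeff (l : ℤ)) • H (j - l)).coeff n = 0 := by
    intro j k n hn
    rw [HahnSeries.coeff_add, HahnSeries.coeff_add, hahn_sum_coeff, hahn_sum_coeff,
      hHlow (j + k) n (by push_cast; omega)]
    rw [Finset.sum_eq_zero (fun l hl => by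
      rw [Finset.mem_Icc] at hl
      rw [HahnSeries.coeff_smul, hHlow (k - l) n (by
        have : ((k - l : ℕ) : ℤ) = (k : ℤ) - l := by omega
        omega), smul_zero])]
    rw [Finset.sum_eq_zero (fun l hl => by
      rw [Finset.mem_Icc] at hl
      rw [HahnSeries.coeff_smul, hHlow (j - l) n (by
        have : ((j - l : ℕ) : ℤ) = (j : ℤ) - l := by omega
        omega), smul_zero])]
    norm_num
  -- multiplied by w, the two sides agree at nonpositive indices
  have hwKTc : ∀ (j k : ℕ) (n : ℤ), n ≤ 0 →
      (w * (liftD (dT j) (H k) + H j * H k)).coeff n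
        = (w * (H (j + k)
            + ∑ l ∈ Finset.Icc 1 k, ((H j).coeff (l : ℤ)) • H (k - l)
            + ∑ l ∈ Finset.Icc 1 j, ((H k).coeff (l : ℤ)) • H (j - l))).coeff n := by
    intro j k n hn
    rw [mul_coeff_Icc w _ 0 (-((j : ℤ) + k)) hwneg (hKlow j k) n,
      mul_coeff_Icc w _ 0 (-((j : ℤ) + k)) hwneg (hTlow j k) n]
    refine Finset.sum_congr rfl fun i hi => ?_
    rw [Finset.mem_Icc] at hi
    rw [hKT j k (n - i) (by omega)]
  -- extracting coefficients from a W-combination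
  have hcoeffW : ∀ (N : ℕ) (c : ℕ → R) (m : ℕ), m ≤ N →
      (∑ i ∈ Finset.range (N + 1), c i • W i).coeff (-(m : ℤ)) = c m := by
    intro N c m hm
    rw [hahn_sum_coeff]
    rw [Finset.sum_eq_single_of_mem m (Finset.mem_range.mpr (by omega))
      (fun l _ hlm => by
        rw [HahnSeries.coeff_smul, hWc l m, if_neg (fun h => hlm h.symm), smul_zero])]
    rw [HahnSeries.coeff_smul, hWc m m, if_pos rfl, smul_eq_mul, mul_one]
  -- w * H i lies in the span of the W's
  have hwH_InW : ∀ (N i : ℕ), i ≤ N → InW W N (w * H i) := by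
    intro N i hi
    rw [hDarboux i]
    exact InW_sum _ _ fun l hl =>
      InW_smul _ (InW_W W (by rw [Finset.mem_range] at hl; omega))
  intro j k
  -- w * LHS lies in the span of the W's
  have e : w * (liftD (dT j) (H k) + H j * H k)
      = ∑ l ∈ Finset.range (k + 1), (dT j (w.coeff ((k - l : ℕ) : ℤ))) • W l
        + ∑ l ∈ Finset.range (k + 1), (w.coeff ((k - l : ℕ) : ℤ)) •
            (W (j + l) + ∑ m ∈ Finset.Icc 1 j, ((W l).coeff (m : ℤ)) • W (j - m)) := by
    rw [part1 j (H k), hDarboux k, liftD_sum, Finset.mul_sum]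
    rw [Finset.sum_congr rfl (fun l _ => liftD_smul (dT j) (hdT j) _ (W l)),
      Finset.sum_congr rfl (fun l _ => hahn_mul_smul (w.coeff ((k - l : ℕ) : ℤ))
        ((Zs R) ^ j) (W l))]
    rw [Finset.sum_add_distrib, add_assoc, ← Finset.sum_add_distrib]
    congr 1
    refine Finset.sum_congr rfl fun l _ => ?_
    rw [← smul_add, hSato j l]
  have hK_InW : InW W (j + k) (w * (liftD (dT j) (H k) + H j * H k)) := by
    rw [e]
    refine InW_add (InW_sum _ _ fun l hl => InW_smul _ (InW_W W ?_))
      (InW_sum _ _ fun l hl => InW_smul _ (InW_add (InW_W W ?_)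
        (InW_sum _ _ fun m hm => InW_smul _ (InW_W W ?_))))
    · rw [Finset.mem_range] at hl; omega
    · rw [Finset.mem_range] at hl; omega
    · rw [Finset.mem_Icc] at hm; omega
  have hT_InW : InW W (j + k) (w * (H (j + k)
      + ∑ l ∈ Finset.Icc 1 k, ((H j).coeff (l : ℤ)) • H (k - l)
      + ∑ l ∈ Finset.Icc 1 j, ((H k).coeff (l : ℤ)) • H (j - l))) := by
    rw [mul_add, mul_add, Finset.mul_sum, Finset.mul_sum]
    refine InW_add (InW_add (hwH_InW _ (j + k) le_rfl) (InW_sum _ _ fun l hl => ?_))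
      (InW_sum _ _ fun l hl => ?_)
    · rw [hahn_mul_smul]
      exact InW_smul _ (hwH_InW (j + k) (k - l) (by omega))
    · rw [hahn_mul_smul]
      exact InW_smul _ (hwH_InW (j + k) (j - l) (by omega))
  obtain ⟨c, hc⟩ := hK_InW
  obtain ⟨d, hd2⟩ := hT_InW
  have hwKT : w * (liftD (dT j) (H k) + H j * H k)
      = w * (H (j + k)
        + ∑ l ∈ Finset.Icc 1 k, ((H j).coeff (l : ℤ)) • H (k - l)
        + ∑ l ∈ Finset.Icc 1 j, ((H k).coeff (l : ℤ)) • H (j - l)) := by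
    rw [hc, hd2]
    refine Finset.sum_congr rfl fun m hm => ?_
    rw [Finset.mem_range] at hm
    have h1 : c m = d m := by
      rw [← hcoeffW (j + k) c m (by omega), ← hcoeffW (j + k) d m (by omega), ← hc, ← hd2]
      exact hwKTc j k (-(m : ℤ)) (by omega)
    rw [h1]
  -- cancel w
  by_contra hne
  have hKT0 : liftD (dT j) (H k) + H j * H k
      - (H (j + k)
        + ∑ l ∈ Finset.Icc 1 k, ((H j).coeff (l : ℤ)) • H (k - l)
        + ∑ l ∈ Finset.Icc 1 j, ((H k).coeff (l : ℤ)) • H (j - l)) ≠ 0 :=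
    sub_ne_zero.mpr hne
  have hsub0 : w * (liftD (dT j) (H k) + H j * H k
      - (H (j + k)
        + ∑ l ∈ Finset.Icc 1 k, ((H j).coeff (l : ℤ)) • H (k - l)
        + ∑ l ∈ Finset.Icc 1 j, ((H k).coeff (l : ℤ)) • H (j - l))) = 0 := by
    rw [mul_sub, hwKT, sub_self]
  set u := liftD (dT j) (H k) + H j * H k
      - (H (j + k)
        + ∑ l ∈ Finset.Icc 1 k, ((H j).coeff (l : ℤ)) • H (k - l)
        + ∑ l ∈ Finset.Icc 1 j, ((H k).coeff (l : ℤ)) • H (j - l)) with hu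
  have hM := mul_coeff_Icc w u 0 (u.order) hwneg
    (fun n hn => HahnSeries.coeff_eq_zero_of_lt_order hn) (u.order)
  rw [hsub0, sub_self, Finset.Icc_self, Finset.sum_singleton, sub_zero, hw0, one_mul,
    HahnSeries.coeff_zero] at hM
  exact mt HahnSeries.coeff_order_eq_zero.mp hKT0 hM.symm
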